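/- Let x₁, …, xₙ ∈ ℝ^d and y₁, …, y_m ∈ ℝ^d be fixed points, M a symmetric d×d real matrix, and let ω_{x,1}, …, ω_{x,n} be i.i.d. MCAR masks with probability vector p ∈ (0,1]^d and ω_{y,1}, …, ω_{y,m} be i.i.d. MCAR masks with probability vector q ∈ (0,1]^d, all masks mutually independent. Let C_{ij} := (x_i − y_j)ᵀ M (x_i − y_j), M̄ := M − P M Q, and G ∈ ℝ^{n×m} with G_{ij} := x_iᵀ M̄ y_j. Then a matrix Π̄ ∈ Π(n,m) minimizes the expected zero-imputed transport objective Π ↦ E[Σ_{i,j} Π_{ij} (x_i⊙ω_{x,i} − y_j⊙ω_{y,j})ᵀ M (x_i⊙ω_{x,i} − y_j⊙ω_{y,j})] over the transport polytope Π(n,m) if and only if Π̄ minimizes Π ↦ Tr[Πᵀ (C + 2G)] over Π(n,m). That is, naive zero imputation implicitly replaces the cost matrix C by the regularized cost matrix C + 2G. -/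

import Mathlib

open MeasureTheory ProbabilityTheory Matrix

/-- The quadratic form `v ↦ vᵀ M v`. -/
def quadForm {d : ℕ} (M : Matrix (Fin d) (Fin d) ℝ) (v : Fin d → ℝ) : ℝ :=
  v ⬝ᵥ (M *ᵥ v)

/-- Membership in the transport polytope `Π(n,m)`: nonnegative entries, rows summing to `1/n`
and columns summing to `1/m`. -/
def IsTransportPlan {n m : ℕ} (Pl : Matrix (Fin n) (Fin m) ℝ) : Prop :=
  (∀ i j, 0 ≤ Pl i j) ∧ (∀ i, ∑ j, Pl i j = 1 / n) ∧ (∀ j, ∑ i, Pl i j = 1 / m)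

section BerAux

variable {Ω : Type*} [MeasurableSpace Ω] {μ : Measure Ω} [IsProbabilityMeasure μ]

private lemma ber_ae_indicator {X : Ω → ℝ} (h01 : ∀ᵐ a ∂μ, X a = 0 ∨ X a = 1) :
    X =ᵐ[μ] Set.indicator {a | X a = 1} (fun _ => (1 : ℝ)) := by
  filter_upwards [h01] with a ha
  rcases ha with h | h
  · have hnot : a ∉ {a | X a = 1} := by simp [h]
    simp [Set.indicator_of_notMem hnot, h]
  · have hmem : a ∈ {a | X a = 1} := h
    simp [Set.indicator_of_mem hmem, h]

private lemma ber_integrable {X : Ω → ℝ} (hm : Measurable X)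
    (h01 : ∀ᵐ a ∂μ, X a = 0 ∨ X a = 1) : Integrable X μ := by
  have hs : MeasurableSet {a | X a = 1} := hm (measurableSet_singleton 1)
  exact ((integrable_const (1 : ℝ)).indicator hs).congr (ber_ae_indicator h01).symm

private lemma ber_integral {X : Ω → ℝ} (hm : Measurable X)
    (h01 : ∀ᵐ a ∂μ, X a = 0 ∨ X a = 1) {c : ℝ} (hc0 : 0 ≤ c)
    (hc : μ {a | X a = 1} = ENNReal.ofReal c) :
    ∫ a, X a ∂μ = c := by
  have hs : MeasurableSet {a | X a = 1} := hm (measurableSet_singleton 1)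
  rw [integral_congr_ae (ber_ae_indicator h01), integral_indicator_const _ hs, measureReal_def, hc,
    ENNReal.toReal_ofReal hc0, smul_eq_mul, mul_one]

private lemma ber_mul01 {X Y : Ω → ℝ} (hX : ∀ᵐ a ∂μ, X a = 0 ∨ X a = 1)
    (hY : ∀ᵐ a ∂μ, Y a = 0 ∨ Y a = 1) :
    ∀ᵐ a ∂μ, X a * Y a = 0 ∨ X a * Y a = 1 := by
  filter_upwards [hX, hY] with a ha hb
  rcases ha with h | h <;> rcases hb with h' | h' <;> simp [h, h']

end BerAux

/-- **Naive zero imputation implicitly regularizes the optimal transport cost.**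
With `Cᵢⱼ = (xᵢ−yⱼ)ᵀM(xᵢ−yⱼ)`, `M̄ = M − P M Q` and `Gᵢⱼ = xᵢᵀ M̄ yⱼ`, a transport plan
`Π̄ ∈ Π(n,m)` minimizes the expected zero-imputed transport objective over the transport
polytope if and only if it minimizes `Π ↦ Tr[Πᵀ (C + 2G)]` over the transport polytope. -/
theorem masked_transport_minimizer_iff
    {Ω : Type*} [MeasurableSpace Ω] (μ : Measure Ω) [IsProbabilityMeasure μ]
    {d n m : ℕ} (x : Fin n → Fin d → ℝ) (y : Fin m → Fin d → ℝ)
    (M : Matrix (Fin d) (Fin d) ℝ) (hM : M.IsSymm)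
    (Wx : Fin n → Ω → Fin d → ℝ) (Wy : Fin m → Ω → Fin d → ℝ)
    (p q : Fin d → ℝ)
    (hp : ∀ i, p i ∈ Set.Ioc (0 : ℝ) 1) (hq : ∀ i, q i ∈ Set.Ioc (0 : ℝ) 1)
    (hWxmeas : ∀ i, Measurable (Wx i)) (hWymeas : ∀ j, Measurable (Wy j))
    (hWx01 : ∀ i, ∀ᵐ a ∂μ, ∀ k, Wx i a k = 0 ∨ Wx i a k = 1)
    (hWy01 : ∀ j, ∀ᵐ a ∂μ, ∀ k, Wy j a k = 0 ∨ Wy j a k = 1)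
    (hWxber : ∀ i k, μ {a | Wx i a k = 1} = ENNReal.ofReal (p k))
    (hWyber : ∀ j k, μ {a | Wy j a k = 1} = ENNReal.ofReal (q k))
    -- all coordinates of all masks are mutually independent
    (hiIndep : iIndepFun
      (fun sk : (Fin n ⊕ Fin m) × Fin d =>
        fun a => Sum.elim (fun i => Wx i a) (fun j => Wy j a) sk.1 sk.2) μ)
    (C G : Matrix (Fin n) (Fin m) ℝ)
    (hC : ∀ i j, C i j = quadForm M (x i - y j))
    (hG : ∀ i j, G i j = x i ⬝ᵥ ((M - Matrix.diagonal p * M * Matrix.diagonal q) *ᵥ y j))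
    (PlBar : Matrix (Fin n) (Fin m) ℝ) (hPlBar : IsTransportPlan PlBar) :
    (∀ Pl, IsTransportPlan Pl →
        (∫ a, ∑ i, ∑ j,
            PlBar i j * quadForm M (fun k => x i k * Wx i a k - y j k * Wy j a k) ∂μ)
          ≤ ∫ a, ∑ i, ∑ j,
              Pl i j * quadForm M (fun k => x i k * Wx i a k - y j k * Wy j a k) ∂μ)
      ↔ (∀ Pl, IsTransportPlan Pl →
          Matrix.trace (PlBarᵀ * (C + (2 : ℝ) • G)) ≤ Matrix.trace (Plᵀ * (C + (2 : ℝ) • G))) := by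
  -- basic measurability and 0/1 facts for individual coordinates
  have hWm : ∀ i k, Measurable fun a => Wx i a k :=
    fun i k => (measurable_pi_apply k).comp (hWxmeas i)
  have hVm : ∀ j k, Measurable fun a => Wy j a k :=
    fun j k => (measurable_pi_apply k).comp (hWymeas j)
  have hW01 : ∀ i k, ∀ᵐ a ∂μ, Wx i a k = 0 ∨ Wx i a k = 1 :=
    fun i k => (hWx01 i).mono fun a ha => ha k
  have hV01 : ∀ j k, ∀ᵐ a ∂μ, Wy j a k = 0 ∨ Wy j a k = 1 :=
    fun j k => (hWy01 j).mono fun a ha => ha k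
  have iW : ∀ i k, Integrable (fun a => Wx i a k) μ :=
    fun i k => ber_integrable (hWm i k) (hW01 i k)
  have iV : ∀ j k, Integrable (fun a => Wy j a k) μ :=
    fun j k => ber_integrable (hVm j k) (hV01 j k)
  have hWE : ∀ i k, ∫ a, Wx i a k ∂μ = p k :=
    fun i k => ber_integral (hWm i k) (hW01 i k) (hp k).1.le (hWxber i k)
  have hVE : ∀ j k, ∫ a, Wy j a k ∂μ = q k :=
    fun j k => ber_integral (hVm j k) (hV01 j k) (hq k).1.le (hWyber j k)
  -- integrability of pairwise products
  have iWW : ∀ i k l, Integrable (fun a => Wx i a k * Wx i a l) μ :=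
    fun i k l => ber_integrable ((hWm i k).mul (hWm i l)) (ber_mul01 (hW01 i k) (hW01 i l))
  have iVV : ∀ j k l, Integrable (fun a => Wy j a k * Wy j a l) μ :=
    fun j k l => ber_integrable ((hVm j k).mul (hVm j l)) (ber_mul01 (hV01 j k) (hV01 j l))
  have iWV : ∀ i j k l, Integrable (fun a => Wx i a k * Wy j a l) μ :=
    fun i j k l => ber_integrable ((hWm i k).mul (hVm j l)) (ber_mul01 (hW01 i k) (hV01 j l))
  have iVW : ∀ i j k l, Integrable (fun a => Wy j a k * Wx i a l) μ :=
    fun i j k l => ber_integrable ((hVm j k).mul (hWm i l)) (ber_mul01 (hV01 j k) (hW01 i l))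
  -- expectations of cross products via independence
  have hWVE : ∀ i j k l, ∫ a, Wx i a k * Wy j a l ∂μ = p k * q l := by
    intro i j k l
    have hind : IndepFun (fun a => Wx i a k) (fun a => Wy j a l) μ :=
      hiIndep.indepFun (show ((Sum.inl i, k) : (Fin n ⊕ Fin m) × Fin d) ≠ (Sum.inr j, l) by simp)
    have h := hind.integral_fun_mul_eq_mul_integral (iW i k).1 (iV j l).1
    rw [hWE i k, hVE j l] at h
    exact h
  have hVWE : ∀ i j k l, ∫ a, Wy j a k * Wx i a l ∂μ = q k * p l := by
    intro i j k l
    have hind : IndepFun (fun a => Wy j a k) (fun a => Wx i a l) μ :=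
      hiIndep.indepFun (show ((Sum.inr j, k) : (Fin n ⊕ Fin m) × Fin d) ≠ (Sum.inl i, l) by simp)
    have h := hind.integral_fun_mul_eq_mul_integral (iV j k).1 (iW i l).1
    rw [hVE j k, hWE i l] at h
    exact h
  -- pointwise expansion of the quadratic form
  have hrepr : ∀ i j (a : Ω), quadForm M (fun k => x i k * Wx i a k - y j k * Wy j a k)
      = ∑ k, ∑ l, (x i k * M k l * x i l * (Wx i a k * Wx i a l)
          - x i k * M k l * y j l * (Wx i a k * Wy j a l)
          - y j k * M k l * x i l * (Wy j a k * Wx i a l)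
          + y j k * M k l * y j l * (Wy j a k * Wy j a l)) := by
    intro i j a
    simp only [quadForm, dotProduct, Matrix.mulVec, Finset.mul_sum]
    exact Finset.sum_congr rfl fun k _ => Finset.sum_congr rfl fun l _ => by ring
  -- integrability of each expanded term
  have hI1 : ∀ i j k l, Integrable (fun a =>
      x i k * M k l * x i l * (Wx i a k * Wx i a l)
      - x i k * M k l * y j l * (Wx i a k * Wy j a l)
      - y j k * M k l * x i l * (Wy j a k * Wx i a l)
      + y j k * M k l * y j l * (Wy j a k * Wy j a l)) μ := fun i j k l =>
    ((((iWW i k l).const_mul _).sub ((iWV i j k l).const_mul _)).sub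
      ((iVW i j k l).const_mul _)).add ((iVV j k l).const_mul _)
  have hIval : ∀ i j k l, (∫ a,
      (x i k * M k l * x i l * (Wx i a k * Wx i a l)
      - x i k * M k l * y j l * (Wx i a k * Wy j a l)
      - y j k * M k l * x i l * (Wy j a k * Wx i a l)
      + y j k * M k l * y j l * (Wy j a k * Wy j a l)) ∂μ)
      = x i k * M k l * x i l * (∫ a, Wx i a k * Wx i a l ∂μ)
        - x i k * M k l * y j l * (p k * q l)
        - y j k * M k l * x i l * (q k * p l)
        + y j k * M k l * y j l * (∫ a, Wy j a k * Wy j a l ∂μ) := by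
    intro i j k l
    have ih1 : Integrable (fun a => x i k * M k l * x i l * (Wx i a k * Wx i a l)) μ :=
      (iWW i k l).const_mul _
    have ih2 : Integrable (fun a => x i k * M k l * y j l * (Wx i a k * Wy j a l)) μ :=
      (iWV i j k l).const_mul _
    have ih3 : Integrable (fun a => y j k * M k l * x i l * (Wy j a k * Wx i a l)) μ :=
      (iVW i j k l).const_mul _
    have ih4 : Integrable (fun a => y j k * M k l * y j l * (Wy j a k * Wy j a l)) μ :=
      (iVV j k l).const_mul _
    have ih12 : Integrable (fun a => x i k * M k l * x i l * (Wx i a k * Wx i a l)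
        - x i k * M k l * y j l * (Wx i a k * Wy j a l)) μ := ih1.sub ih2
    have ih123 : Integrable (fun a => x i k * M k l * x i l * (Wx i a k * Wx i a l)
        - x i k * M k l * y j l * (Wx i a k * Wy j a l)
        - y j k * M k l * x i l * (Wy j a k * Wx i a l)) μ := ih12.sub ih3
    rw [integral_add ih123 ih4, integral_sub ih12 ih3, integral_sub ih1 ih2,
      integral_const_mul, integral_const_mul, integral_const_mul, integral_const_mul,
      hWVE i j k l, hVWE i j k l]
  -- integrability of the full quadratic form
  have hgInt : ∀ i j, Integrable
      (fun a => quadForm M (fun k => x i k * Wx i a k - y j k * Wy j a k)) μ := by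
    intro i j
    exact (integrable_finset_sum _ fun k _ => integrable_finset_sum _ fun l _ =>
      hI1 i j k l).congr (Filter.Eventually.of_forall fun a => (hrepr i j a).symm)
  -- the key per-pair expectation identity
  have hkey : ∀ i j, (∫ a, quadForm M (fun k => x i k * Wx i a k - y j k * Wy j a k) ∂μ)
      = (C + (2 : ℝ) • G) i j
        + (((∑ k, ∑ l, x i k * M k l * x i l * (∫ a, Wx i a k * Wx i a l ∂μ))
              - quadForm M (x i))
          + ((∑ k, ∑ l, y j k * M k l * y j l * (∫ a, Wy j a k * Wy j a l ∂μ))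
              - quadForm M (y j))) := by
    intro i j
    have hL : (∫ a, quadForm M (fun k => x i k * Wx i a k - y j k * Wy j a k) ∂μ)
        = ∑ k, ∑ l, (x i k * M k l * x i l * (∫ a, Wx i a k * Wx i a l ∂μ)
            - x i k * M k l * y j l * (p k * q l)
            - y j k * M k l * x i l * (q k * p l)
            + y j k * M k l * y j l * (∫ a, Wy j a k * Wy j a l ∂μ)) := by
      simp_rw [hrepr i j]
      rw [integral_finset_sum _ fun k _ => integrable_finset_sum _ fun l _ => hI1 i j k l]
      refine Finset.sum_congr rfl fun k _ => ?_
      rw [integral_finset_sum _ fun l _ => hI1 i j k l]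
      exact Finset.sum_congr rfl fun l _ => hIval i j k l
    -- expansions of C and G
    have hT1 : quadForm M (x i) = ∑ k, ∑ l, x i k * (M k l * x i l) := by
      simp only [quadForm, dotProduct, Matrix.mulVec, Finset.mul_sum]
    have hT2 : quadForm M (y j) = ∑ k, ∑ l, y j k * (M k l * y j l) := by
      simp only [quadForm, dotProduct, Matrix.mulVec, Finset.mul_sum]
    have hCexp : C i j = (∑ k, ∑ l, x i k * (M k l * x i l))
        - (∑ k, ∑ l, x i k * (M k l * y j l))
        - (∑ k, ∑ l, y j k * (M k l * x i l))
        + (∑ k, ∑ l, y j k * (M k l * y j l)) := by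
      rw [hC i j]
      simp only [quadForm, dotProduct, Matrix.mulVec, Pi.sub_apply, Finset.mul_sum]
      have hh : ∀ k l : Fin d, (x i k - y j k) * (M k l * (x i l - y j l))
          = x i k * (M k l * x i l) - x i k * (M k l * y j l)
            - y j k * (M k l * x i l) + y j k * (M k l * y j l) := fun k l => by ring
      simp_rw [hh]
      simp only [Finset.sum_sub_distrib, Finset.sum_add_distrib]
    have hGexp : G i j = (∑ k, ∑ l, x i k * (M k l * y j l))
        - ∑ k, ∑ l, x i k * M k l * y j l * (p k * q l) := by
      rw [hG i j]
      simp only [dotProduct, Matrix.mulVec, Matrix.sub_apply, Matrix.mul_diagonal,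
        Matrix.diagonal_mul, Finset.mul_sum]
      have hh : ∀ k l : Fin d, x i k * ((M k l - p k * M k l * q l) * y j l)
          = x i k * (M k l * y j l) - x i k * M k l * y j l * (p k * q l) := fun k l => by ring
      simp_rw [hh]
      simp only [Finset.sum_sub_distrib]
    have e2 : (∑ k, ∑ l, y j k * M k l * x i l * (q k * p l))
        = ∑ k, ∑ l, x i k * M k l * y j l * (p k * q l) := by
      rw [Finset.sum_comm]
      exact Finset.sum_congr rfl fun k _ => Finset.sum_congr rfl fun l _ => by
        rw [hM.apply k l]; ring
    have e3 : (∑ k, ∑ l, y j k * (M k l * x i l)) = ∑ k, ∑ l, x i k * (M k l * y j l) := by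
      rw [Finset.sum_comm]
      exact Finset.sum_congr rfl fun k _ => Finset.sum_congr rfl fun l _ => by
        rw [hM.apply k l]; ring
    rw [hL]
    simp only [Finset.sum_sub_distrib, Finset.sum_add_distrib]
    rw [Matrix.add_apply, Matrix.smul_apply, smul_eq_mul]
    rw [hCexp, hGexp, hT1, hT2, e2, e3]
    ring
  -- the objective as trace plus a constant
  have hobj : ∀ Pl : Matrix (Fin n) (Fin m) ℝ, IsTransportPlan Pl →
      (∫ a, ∑ i, ∑ j,
          Pl i j * quadForm M (fun k => x i k * Wx i a k - y j k * Wy j a k) ∂μ)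
        = Matrix.trace (Plᵀ * (C + (2 : ℝ) • G))
          + ((∑ i, 1 / (n : ℝ) *
                ((∑ k, ∑ l, x i k * M k l * x i l * (∫ a, Wx i a k * Wx i a l ∂μ))
                  - quadForm M (x i)))
            + ∑ j, 1 / (m : ℝ) *
                ((∑ k, ∑ l, y j k * M k l * y j l * (∫ a, Wy j a k * Wy j a l ∂μ))
                  - quadForm M (y j))) := by
    intro Pl hPl
    have hswap : (∫ a, ∑ i, ∑ j,
        Pl i j * quadForm M (fun k => x i k * Wx i a k - y j k * Wy j a k) ∂μ)
        = ∑ i, ∑ j, Pl i j *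
            ∫ a, quadForm M (fun k => x i k * Wx i a k - y j k * Wy j a k) ∂μ := by
      refine (integral_finset_sum _ fun i _ => integrable_finset_sum _ fun j _ =>
        (hgInt i j).const_mul _).trans ?_
      refine Finset.sum_congr rfl fun i _ => ?_
      refine (integral_finset_sum _ fun j _ => (hgInt i j).const_mul _).trans ?_
      exact Finset.sum_congr rfl fun j _ => integral_const_mul _ _
    rw [hswap]
    simp_rw [hkey, mul_add]
    simp only [Finset.sum_add_distrib]
    have htr : (∑ i, ∑ j, Pl i j * (C + (2 : ℝ) • G) i j)
        = Matrix.trace (Plᵀ * (C + (2 : ℝ) • G)) := by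
      have h1 : Matrix.trace (Plᵀ * (C + (2 : ℝ) • G))
          = ∑ j, ∑ i, Pl i j * (C + (2 : ℝ) • G) i j := by
        simp [Matrix.trace, Matrix.diag, Matrix.mul_apply]
      rw [h1, Finset.sum_comm]
    have hca : (∑ i, ∑ j, Pl i j *
        ((∑ k, ∑ l, x i k * M k l * x i l * (∫ a, Wx i a k * Wx i a l ∂μ))
          - quadForm M (x i)))
        = ∑ i, 1 / (n : ℝ) *
            ((∑ k, ∑ l, x i k * M k l * x i l * (∫ a, Wx i a k * Wx i a l ∂μ))
              - quadForm M (x i)) := by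
      refine Finset.sum_congr rfl fun i _ => ?_
      rw [← Finset.sum_mul, hPl.2.1 i]
    have hcb : (∑ i, ∑ j, Pl i j *
        ((∑ k, ∑ l, y j k * M k l * y j l * (∫ a, Wy j a k * Wy j a l ∂μ))
          - quadForm M (y j)))
        = ∑ j, 1 / (m : ℝ) *
            ((∑ k, ∑ l, y j k * M k l * y j l * (∫ a, Wy j a k * Wy j a l ∂μ))
              - quadForm M (y j)) := by
      rw [Finset.sum_comm]
      refine Finset.sum_congr rfl fun j _ => ?_
      rw [← Finset.sum_mul, hPl.2.2 j]
    rw [htr, hca, hcb]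
  constructor
  · intro h Pl hPl
    have h2 := h Pl hPl
    rw [hobj PlBar hPlBar, hobj Pl hPl] at h2
    exact (add_le_add_iff_right _).mp h2
  · intro h Pl hPl
    have h2 := h Pl hPl
    rw [hobj PlBar hPlBar, hobj Pl hPl]
    exact (add_le_add_iff_right _).mpr h2
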